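/- Let s ∈ (0,∞). (a) For every real t ≥ 1/2 and every δ > 0 there exist n ∈ ℕ and ε ∈ E_n such that |2^n/(1/s + 2(ε)₂) − t| < δ; that is, the line through the origin of slope s can be mapped by some M_ε to a line whose slope is within δ of t. (b) For every M > 0 there exist n ∈ ℕ and ε ∈ E_n such that 2^n/(1/s + 2(ε)₂) > M. -/

import Mathlib

/-- The shearlet dilation matrix `M_k`: first row `(1/4, k/2)`, second row `(0, 1/2)`. -/
noncomputable def Mmat (k : ℤ) : Matrix (Fin 2) (Fin 2) ℝ :=
  !![1/4, (k : ℝ)/2; 0, 1/2]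

/-- `M_ε = M_{ε_n} ⋯ M_{ε_1}` for `ε = (ε_1, …, ε_n)` (0-indexed: `ε_i = ε (i-1)`). -/
noncomputable def Mprod {n : ℕ} (ε : Fin n → ℤ) : Matrix (Fin 2) (Fin 2) ℝ :=
  ((List.ofFn fun i => Mmat (ε i)).reverse).prod

/-- `(ε)₂ = Σ_{j=0}^{n-1} ε_{j+1} 2^j`. -/
def binVal {n : ℕ} (ε : Fin n → ℤ) : ℤ := ∑ j : Fin n, ε j * 2 ^ (j : ℕ)

lemma exists_bits : ∀ (N m : ℕ), m < 2^N →
    ∃ ε : Fin N → ℤ, (∀ i, ε i = 0 ∨ ε i = 1) ∧ binVal ε = m := by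
  intro N
  induction N with
  | zero =>
    intro m hm
    interval_cases m
    exact ⟨fun i => 0, fun i => Or.inl rfl, by simp [binVal]⟩
  | succ N ih =>
    intro m hm
    have h2 : m / 2 < 2 ^ N := by omega
    obtain ⟨ε', hε', hval⟩ := ih (m / 2) h2
    refine ⟨Fin.cons ((m % 2 : ℕ) : ℤ) ε', ?_, ?_⟩
    · intro i
      refine Fin.cases ?_ ?_ i
      · simp only [Fin.cons_zero]
        omega
      · intro j; simp only [Fin.cons_succ]; exact hε' j
    · simp only [binVal, Fin.sum_univ_succ, Fin.cons_zero, Fin.cons_succ, Fin.val_succ,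
        Fin.val_zero, pow_zero, mul_one, pow_succ]
      have : ∑ j : Fin N, ε' j * (2 ^ (j:ℕ) * 2) = 2 * binVal ε' := by
        simp only [binVal, Finset.mul_sum]
        exact Finset.sum_congr rfl fun j _ => by ring
      rw [this, hval]
      omega

set_option maxHeartbeats 1000000 in
theorem stmt3 (s : ℝ) (hs : 0 < s) :
    (∀ t : ℝ, 1/2 ≤ t → ∀ δ : ℝ, 0 < δ →
      ∃ (n : ℕ) (ε : Fin n → ℤ), 0 < n ∧ (∀ i, ε i = 0 ∨ ε i = 1) ∧
        |(2:ℝ)^n / (1/s + 2 * (binVal ε : ℝ)) - t| < δ) ∧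
    (∀ M : ℝ, 0 < M →
      ∃ (n : ℕ) (ε : Fin n → ℤ), 0 < n ∧ (∀ i, ε i = 0 ∨ ε i = 1) ∧
        M < (2:ℝ)^n / (1/s + 2 * (binVal ε : ℝ))) := by
  constructor
  · intro t ht δ hδ
    have ht0 : (0:ℝ) < t := by linarith
    set a : ℝ := 1/s with ha_def
    have ha : 0 < a := by positivity
    obtain ⟨N₀, hN₀⟩ := pow_unbounded_of_one_lt
      (max (max (t/s) (2*t^2/δ)) (1/δ + 2)) (one_lt_two (α := ℝ))
    set N := N₀ + 1 with hN_def
    have hpow : (2:ℝ)^N₀ ≤ 2^N := by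
      rw [hN_def, pow_succ]; nlinarith [pow_pos (two_pos (α := ℝ)) N₀]
    have hN : max (max (t/s) (2*t^2/δ)) (1/δ + 2) < 2^N := lt_of_lt_of_le hN₀ hpow
    have h1 : t/s < 2^N := lt_of_le_of_lt (le_trans (le_max_left _ _) (le_max_left _ _)) hN
    have h2 : 2*t^2 < δ * 2^N := by
      have := lt_of_le_of_lt (le_trans (le_max_right _ _) (le_max_left _ _)) hN
      rw [div_lt_iff₀ hδ] at this; linarith
    have h3 : 1/δ + 2 < 2^N := lt_of_le_of_lt (le_max_right _ _) hN
    have hpos : (0:ℝ) < 2^N := by positivity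
    have h2le : (2:ℝ) ≤ 2^N := by
      have h01 : (1:ℝ) ≤ 2^N₀ := one_le_pow₀ (by norm_num)
      rw [hN_def, pow_succ]; nlinarith
    have hca : 0 < (2:ℝ)^N / t - a := by
      have h1' : t < 2^N * s := (div_lt_iff₀ hs).mp h1
      rw [ha_def, sub_pos, div_lt_div_iff₀ hs ht0]
      nlinarith
    set c : ℤ := ⌈((2:ℝ)^N / t - a)/2⌉ with hc_def
    have hc0 : 0 < c := by
      rw [hc_def, Int.ceil_pos]; positivity
    have hcl : ((2:ℝ)^N / t - a)/2 ≤ c := Int.le_ceil _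
    have hcu : (c:ℝ) < ((2:ℝ)^N / t - a)/2 + 1 := Int.ceil_lt_add_one _
    by_cases hcase : c ≤ 2^N - 1
    · -- c fits in N bits
      set m : ℕ := c.toNat with hm_def
      have hmc : (m:ℤ) = c := Int.toNat_of_nonneg hc0.le
      have hmlt : m < 2^N := by
        have : (m:ℤ) ≤ 2^N - 1 := hmc ▸ hcase
        have h2N : ((2^N : ℕ) : ℤ) = 2^N := by push_cast; ring
        omega
      obtain ⟨ε, hε, hεval⟩ := exists_bits N m hmlt
      refine ⟨N, ε, by omega, hε, ?_⟩
      have hbv : ((binVal ε : ℝ)) = (c:ℝ) := by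
        rw [hεval, ← hmc]
      rw [hbv]
      set D : ℝ := a + 2 * c with hD_def
      have hD1 : (2:ℝ)^N / t ≤ D := by rw [hD_def]; linarith
      have hD2 : D < (2:ℝ)^N / t + 2 := by rw [hD_def]; linarith
      have hDpos : 0 < D := lt_of_lt_of_le (by positivity) hD1
      have htD : (2:ℝ)^N ≤ t * D := by
        have := (div_le_iff₀ ht0).mp hD1
        linarith
      have htD2 : t * D < (2:ℝ)^N + 2 * t := by
        have he : t * ((2:ℝ)^N / t + 2) = 2^N + 2*t := by field_simp
        nlinarith
      have hfD : (2:ℝ)^N / D * D = 2^N := div_mul_cancel₀ _ hDpos.ne'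
      rw [abs_lt]
      constructor
      · -- -δ < f - t, i.e. t - f < δ
        have hδD : 2*t < δ * D := by
          nlinarith [mul_le_mul_of_nonneg_left htD hδ.le]
        have : t - δ < (2:ℝ)^N / D := by
          rw [lt_div_iff₀ hDpos]; nlinarith
        linarith
      · -- f - t < δ : f ≤ t
        have hfle : (2:ℝ)^N / D ≤ t := by
          rw [div_le_iff₀ hDpos]; linarith
        linarith
    · -- c too big: use m = 2^N - 1
      push_neg at hcase
      have hcge : (2:ℤ)^N ≤ c := by omega
      set m : ℕ := 2^N - 1 with hm_def
      have hmlt : m < 2^N := by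
        have : 0 < 2^N := Nat.two_pow_pos N
        omega
      obtain ⟨ε, hε, hεval⟩ := exists_bits N m hmlt
      refine ⟨N, ε, by omega, hε, ?_⟩
      have hbv : ((binVal ε : ℝ)) = (2:ℝ)^N - 1 := by
        rw [hεval, hm_def]
        have : 1 ≤ 2^N := Nat.one_le_two_pow
        push_cast [this]
        ring
      rw [hbv]
      set D : ℝ := a + 2 * ((2:ℝ)^N - 1) with hD_def
      have hDpos : 0 < D := by
        rw [hD_def]; linarith
      -- from hcge and hcu: 2^N - 1 < (2^N/t - a)/2, so D < 2^N/t
      have hDlt : D < (2:ℝ)^N / t := by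
        have h4 : ((2:ℤ)^N : ℝ) ≤ (c:ℝ) := by exact_mod_cast hcge
        have h5 : ((2:ℝ):ℝ)^N ≤ (c:ℝ) := by push_cast at h4; linarith
        rw [hD_def]
        linarith
      have htD : t * D < (2:ℝ)^N := by
        have := (lt_div_iff₀ ht0).mp hDlt
        linarith
      have hfD : (2:ℝ)^N / D * D = 2^N := div_mul_cancel₀ _ hDpos.ne'
      have hDge : 1/δ < D := by
        rw [hD_def]
        linarith [h3]
      rw [abs_lt]
      constructor
      · -- -δ < f - t : t < f
        have : t < (2:ℝ)^N / D := by rw [lt_div_iff₀ hDpos]; linarith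
        linarith
      · -- f - t < δ : (f - t)*D = 2^N - t*D ≤ 2^N - D/2 = (2 - a)/2 < 1 < δ*D
        have hkey : ((2:ℝ)^N / D - t) * D < 1 := by
          have h6 : (2:ℝ)^N - t * D ≤ (2:ℝ)^N - D/2 := by nlinarith
          have h7 : (2:ℝ)^N - D/2 = (2 - a)/2 := by rw [hD_def]; ring
          nlinarith
        have hδD : 1 < δ * D := by
          have := (div_lt_iff₀ hδ).mp hDge
          linarith
        nlinarith
  · intro M hM
    obtain ⟨n₀, hn⟩ := pow_unbounded_of_one_lt (M/s) (one_lt_two (α := ℝ))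
    refine ⟨n₀ + 1, fun _ => 0, by omega, fun i => Or.inl rfl, ?_⟩
    have hbv : (binVal (fun _ : Fin (n₀+1) => (0:ℤ)) : ℝ) = 0 := by
      simp [binVal]
    rw [hbv]
    have h1 : 1/s + 2 * (0:ℝ) = 1/s := by ring
    have h2 : (2:ℝ)^(n₀+1) / (1/s) = 2^(n₀+1) * s := by field_simp
    rw [h1, h2, pow_succ]
    have h3 : M < 2^n₀ * s := by
      rw [div_lt_iff₀ hs] at hn; linarith
    nlinarith [mul_pos (pow_pos (two_pos (α := ℝ)) n₀) hs]
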